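/- For every invertible endomorphism g of a finite-dimensional real vector space V there exist unique commuting elements e, h, u ∈ GL(V) with g = ehu, where e is semisimple with all complex eigenvalues of absolute value one, h is semisimple with all eigenvalues positive real, and u is unipotent. -/

import Mathlib

open TensorProduct

/-- An endomorphism of a vector space over `K` is diagonalizable if its eigenspaces span. -/
def IsDiag {K M : Type*} [Field K] [AddCommGroup M] [Module K M]
    (f : Module.End K M) : Prop :=
  (⨆ μ : K, f.eigenspace μ) = ⊤

/-- The complexification of a real endomorphism, acting on `ℂ ⊗[ℝ] V`. -/
noncomputable def cplx {V : Type*} [AddCommGroup V] [Module ℝ V]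
    (X : Module.End ℝ V) : Module.End ℂ (ℂ ⊗[ℝ] V) :=
  LinearMap.baseChange ℂ X

/-- `X` is (additively) elliptic: semisimple with purely imaginary eigenvalues. -/
noncomputable def IsElliptic {V : Type*} [AddCommGroup V] [Module ℝ V]
    (X : Module.End ℝ V) : Prop :=
  IsDiag (cplx X) ∧ ∀ μ : ℂ, (cplx X).HasEigenvalue μ → μ.re = 0

/-- `X` is (additively) hyperbolic: semisimple with real eigenvalues. -/
noncomputable def IsHyperbolic {V : Type*} [AddCommGroup V] [Module ℝ V]
    (X : Module.End ℝ V) : Prop :=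
  IsDiag (cplx X) ∧ ∀ μ : ℂ, (cplx X).HasEigenvalue μ → μ.im = 0

/-- `g` is (multiplicatively) elliptic: semisimple with eigenvalues of absolute value one. -/
noncomputable def IsMultElliptic {V : Type*} [AddCommGroup V] [Module ℝ V]
    (g : Module.End ℝ V) : Prop :=
  IsDiag (cplx g) ∧ ∀ μ : ℂ, (cplx g).HasEigenvalue μ → ‖μ‖ = 1

/-- `g` is (multiplicatively) hyperbolic: semisimple with positive real eigenvalues. -/
noncomputable def IsMultHyperbolic {V : Type*} [AddCommGroup V] [Module ℝ V]
    (g : Module.End ℝ V) : Prop :=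
  IsDiag (cplx g) ∧ ∀ μ : ℂ, (cplx g).HasEigenvalue μ → μ.im = 0 ∧ 0 < μ.re

namespace MJD

open Polynomial

local notation "conj'" => starRingEnd ℂ

/-! ### Generic helpers over a field -/

section Generic
variable {K M : Type*} [Field K] [AddCommGroup M] [Module K M]

lemma aeval_apply_smul (S : Module.End K M) {x : M} {c : K} (hx : S x = c • x) (p : K[X]) :
    aeval S p x = p.eval c • x := by
  rcases eq_or_ne x 0 with rfl | hne
  · simp
  · exact Module.End.aeval_apply_of_hasEigenvector
      ⟨Module.End.mem_eigenspace_iff.mpr hx, hne⟩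

lemma isRoot_of_hasEigenvalue_of_aeval_eq_zero {S : Module.End K M} {R : K[X]}
    (hR : aeval S R = 0) {μ : K} (hμ : S.HasEigenvalue μ) : R.IsRoot μ := by
  obtain ⟨x, hx⟩ := hμ.exists_hasEigenvector
  have h0 : aeval S R x = R.eval μ • x := aeval_apply_smul S hx.apply_eq_smul R
  rw [hR] at h0
  simp only [LinearMap.zero_apply] at h0
  exact (smul_eq_zero.mp h0.symm).resolve_right hx.right

lemma ext_of_isDiag {T : Module.End K M} (hT : IsDiag T) {F G : Module.End K M}
    (h : ∀ μ x, x ∈ T.eigenspace μ → F x = G x) : F = G := by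
  have hle : ⨆ μ : K, T.eigenspace μ ≤ LinearMap.ker (F - G) := by
    refine iSup_le fun μ x hx => ?_
    simp [LinearMap.mem_ker, h μ x hx]
  rw [hT, top_le_iff] at hle
  ext x
  have : (F - G) x = 0 := by rw [← LinearMap.mem_ker, hle]; trivial
  simpa [sub_eq_zero] using this

lemma commute_aeval {a f : Module.End K M} (h : Commute a f) (p : K[X]) :
    Commute a (aeval f p) := by
  induction p using Polynomial.induction_on with
  | C r => simpa using (Algebra.commute_algebraMap_right r a)
  | add p q hp hq => simpa [map_add] using hp.add_right hq
  | monomial n r hp =>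
      simp only [map_mul, aeval_C, map_pow, aeval_X]
      exact (Algebra.commute_algebraMap_right r a).mul_right (h.pow_right _)

lemma commute_of_mem_adjoin {a f b : Module.End K M} (h : Commute a f)
    (hb : b ∈ Algebra.adjoin K {f}) : Commute a b := by
  rw [Algebra.adjoin_singleton_eq_range_aeval] at hb
  obtain ⟨p, rfl⟩ := hb
  exact commute_aeval h p

lemma commute_of_mem_adjoin_both {a b f : Module.End K M}
    (ha : a ∈ Algebra.adjoin K {f}) (hb : b ∈ Algebra.adjoin K {f}) : Commute a b :=
  commute_of_mem_adjoin (commute_of_mem_adjoin rfl ha).symm hb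

end Generic

/-! ### Helpers over ℂ -/

section Cplx
variable {W : Type*} [AddCommGroup W] [Module ℂ W] [FiniteDimensional ℂ W]

/-- Eigenvalue finset: roots of the minimal polynomial. -/
noncomputable def evs (T : Module.End ℂ W) : Finset ℂ := (minpoly ℂ T).roots.toFinset

lemma mem_evs_of_hasEigenvalue {T : Module.End ℂ W} {μ : ℂ} (h : T.HasEigenvalue μ) :
    μ ∈ evs T := by
  rw [evs, Multiset.mem_toFinset, mem_roots (minpoly.ne_zero_of_finite ℂ T)]
  exact (Module.End.hasEigenvalue_iff_isRoot).mp h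

omit [FiniteDimensional ℂ W] in
lemma aeval_prod_eq_zero {T : Module.End ℂ W} (hT : IsDiag T) (r : ℂ → ℂ) {F : Finset ℂ}
    (hF : ∀ μ, T.HasEigenvalue μ → μ ∈ F) (hr : ∀ μ ∈ F, r μ = μ) :
    aeval T (∏ l ∈ F, (X - C (r l))) = 0 := by
  refine ext_of_isDiag hT (fun μ x hx => ?_)
  rcases eq_or_ne x 0 with rfl | hne
  · simp
  have hμ : T.HasEigenvalue μ := Module.End.hasEigenvalue_of_hasEigenvector ⟨hx, hne⟩
  have hx' : T x = μ • x := Module.End.mem_eigenspace_iff.mp hx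
  rw [aeval_apply_smul T hx']
  have : (∏ l ∈ F, (X - C (r l))).eval μ = 0 := by
    rw [eval_prod]
    exact Finset.prod_eq_zero (hF μ hμ) (by simp [hr μ (hF μ hμ)])
  simp [this]

omit [FiniteDimensional ℂ W] in
/-- If a diagonalizable endomorphism acts on each eigenspace of `T` (which spans) as a scalar
which is a root of `R`, then `R` annihilates it. More precisely we use scalar-action form. -/
lemma aeval_eq_zero_of_scalar_on_eigenspaces {T S : Module.End ℂ W} (hT : IsDiag T)
    {R : ℂ[X]} (h : ∀ μ x, x ∈ T.eigenspace μ → ∃ c : ℂ, S x = c • x ∧ R.eval c • x = 0) :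
    aeval S R = 0 := by
  refine ext_of_isDiag hT (fun μ x hx => ?_)
  obtain ⟨c, hc, hzero⟩ := h μ x hx
  rw [aeval_apply_smul S hc]
  simpa using hzero

lemma squarefree_prod_X_sub_C (F : Finset ℂ) : Squarefree (∏ l ∈ F, (X - C l)) := by
  have : (∏ l ∈ F, (X - C l)).Separable :=
    Polynomial.separable_prod_X_sub_C_iff'.mpr (Set.injOn_id _)
  exact this.squarefree

lemma isSemisimple_of_isDiag {T : Module.End ℂ W} (hT : IsDiag T) : T.IsSemisimple :=
  Module.End.isSemisimple_of_squarefree_aeval_eq_zero (squarefree_prod_X_sub_C (evs T))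
    (by
      simpa using aeval_prod_eq_zero hT id (fun _ h => mem_evs_of_hasEigenvalue h)
        (fun _ _ => rfl))

lemma isDiag_of_isSemisimple {T : Module.End ℂ W} (hss : T.IsSemisimple) : IsDiag T := by
  have h1 := Module.End.iSup_maxGenEigenspace_eq_top T
  rw [IsDiag]
  simp_rw [← hss.isFinitelySemisimple.maxGenEigenspace_eq_eigenspace]
  exact h1

lemma mem_evs_ne_zero {T : Module.End ℂ W} (hT : IsUnit T) {μ : ℂ} (hμ : μ ∈ evs T) :
    μ ≠ 0 := by
  rintro rfl
  rw [evs, Multiset.mem_toFinset, mem_roots (minpoly.ne_zero_of_finite ℂ T)] at hμ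
  have h2 : T.HasEigenvalue 0 := Module.End.hasEigenvalue_iff_isRoot.mpr hμ
  rw [Module.End.hasEigenvalue_iff] at h2
  apply h2
  rw [Module.End.eigenspace_zero]
  exact LinearMap.ker_eq_bot.mpr (Module.End.isUnit_iff T |>.mp hT).injective

end Cplx

/-! ### Conjugation / realness of polynomials -/

lemma map_conj_eval (q : ℂ[X]) (z : ℂ) :
    (q.map conj').eval z = conj' (q.eval (conj' z)) := by
  have h : z = conj' (conj' z) := by simp
  rw [h, eval_map, eval₂_at_apply]
  simp

lemma exists_real_map_eq {q : ℂ[X]} (h : ∀ n, (q.coeff n).im = 0) :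
    ∃ P : Polynomial ℝ, P.map (algebraMap ℝ ℂ) = q := by
  refine ⟨∑ n ∈ q.support, (C (q.coeff n).re * X ^ n), ?_⟩
  have hc : ∀ n, (∑ m ∈ q.support, (C (q.coeff m).re * X ^ m)).coeff n = (q.coeff n).re := by
    intro n
    rw [finset_sum_coeff]
    simp only [coeff_C_mul, coeff_X_pow, mul_ite, mul_one, mul_zero]
    rcases Finset.decidableMem n q.support with hn | hn
    · rw [Finset.sum_eq_zero]
      · have : q.coeff n = 0 := by
          by_contra hc0; exact hn (Polynomial.mem_support_iff.mpr hc0)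
        simp [this]
      · intro m hm
        have : n ≠ m := fun he => hn (he ▸ hm)
        simp [this]
    · rw [Finset.sum_eq_single n]
      · simp
      · intro m hm hne; simp [Ne.symm hne]
      · intro hn'; exact absurd hn hn'
  ext n
  rw [coeff_map, hc]
  apply Complex.ext <;> simp [h n]

lemma coeff_im_zero_of_map_conj {q : ℂ[X]} (h : q.map conj' = q) (n : ℕ) :
    (q.coeff n).im = 0 := by
  have h2 := congrArg (fun p => Polynomial.coeff p n) h
  simp only [coeff_map] at h2
  exact Complex.conj_eq_iff_im.mp h2

lemma interp_abs (Λ : Finset ℂ) (hconj : ∀ l ∈ Λ, conj' l ∈ Λ) :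
    ∃ P : Polynomial ℝ, ∀ l ∈ Λ, (P.map (algebraMap ℝ ℂ)).eval l = ((‖l‖ : ℝ) : ℂ) := by
  set vals : ℂ → ℂ := fun l => ((‖l‖ : ℝ) : ℂ) with hvals
  set q := Lagrange.interpolate Λ id vals with hqdef
  have hinj : Set.InjOn id (Λ : Set ℂ) := Set.injOn_id _
  have hq : q.map conj' = q := by
    have hdeg : (q.map conj').degree < Λ.card := by
      rw [degree_map]
      exact Lagrange.degree_interpolate_lt _ hinj
    have h1 := Lagrange.eq_interpolate (s := Λ) (v := id) hinj hdeg
    rw [h1, hqdef]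
    apply Lagrange.interpolate_eq_of_values_eq_on
    intro l hl
    simp only [id_eq]
    rw [map_conj_eval]
    have h2 : q.eval (conj' l) = vals (conj' l) := by
      have := Lagrange.eval_interpolate_at_node vals hinj (hconj l hl)
      exact this
    rw [h2]
    simp [hvals, Complex.norm_conj]
  obtain ⟨P, hP⟩ := exists_real_map_eq (coeff_im_zero_of_map_conj hq)
  refine ⟨P, fun l hl => ?_⟩
  rw [hP]
  have := Lagrange.eval_interpolate_at_node vals hinj hl
  exact this

/-! ### Complexification basics -/

section Real
variable {V : Type*} [AddCommGroup V] [Module ℝ V]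

lemma cplx_def (f : Module.End ℝ V) : cplx f = Module.End.baseChangeHom ℝ ℂ V f := rfl

lemma cplx_mul (f g : Module.End ℝ V) : cplx (f * g) = cplx f * cplx g := by
  simp [cplx_def, map_mul]

lemma cplx_one : cplx (1 : Module.End ℝ V) = 1 := by simp [cplx_def, map_one]

lemma cplx_zero : cplx (0 : Module.End ℝ V) = 0 := by simp [cplx_def, map_zero]

lemma cplx_aeval (f : Module.End ℝ V) (p : Polynomial ℝ) :
    cplx (aeval f p) = aeval (cplx f) (p.map (algebraMap ℝ ℂ)) := by
  rw [aeval_map_algebraMap]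
  exact (aeval_algHom_apply (Module.End.baseChangeHom ℝ ℂ V) f p).symm

/-- real part projection -/
noncomputable def repart : (ℂ ⊗[ℝ] V) →ₗ[ℝ] V :=
  TensorProduct.lift ((LinearMap.lsmul ℝ V).comp Complex.reLm)

lemma repart_tmul (z : ℂ) (v : V) : repart (z ⊗ₜ v) = z.re • v := rfl

lemma cplx_injective : Function.Injective (cplx (V := V)) := by
  intro f g h
  ext v
  have := congrArg (fun T => repart (V := V) (T (1 ⊗ₜ[ℝ] v))) h
  simpa [cplx, repart_tmul] using this

lemma one_tmul_eq_zero_iff {v : V} : (1 : ℂ) ⊗ₜ[ℝ] v = 0 ↔ v = 0 := by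
  constructor
  · intro h
    have := congrArg (repart (V := V)) h
    simpa [repart_tmul] using this
  · rintro rfl; simp

lemma cplx_isUnit {f : Module.End ℝ V} (h : IsUnit f) : IsUnit (cplx f) := by
  rw [cplx_def]; exact h.map _

variable [FiniteDimensional ℝ V]

lemma isDiag_cplx_of_isSemisimple {f : Module.End ℝ V} (hf : f.IsSemisimple) :
    IsDiag (cplx f) := by
  have hsq : Squarefree (minpoly ℝ f) := hf.minpoly_squarefree
  have hsep : (minpoly ℝ f).Separable := PerfectField.separable_iff_squarefree.mpr hsq
  have hsep' : ((minpoly ℝ f).map (algebraMap ℝ ℂ)).Separable := hsep.map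
  have h0 : aeval (cplx f) ((minpoly ℝ f).map (algebraMap ℝ ℂ)) = 0 := by
    rw [← cplx_aeval, minpoly.aeval, cplx_zero]
  exact isDiag_of_isSemisimple
    (Module.End.isSemisimple_of_squarefree_aeval_eq_zero hsep'.squarefree h0)

lemma isSemisimple_of_isDiag_cplx {f : Module.End ℝ V} (hf : IsDiag (cplx f)) :
    f.IsSemisimple := by
  set F := evs (cplx f) ∪ (evs (cplx f)).image conj' with hF
  have hq : aeval (cplx f) (∏ l ∈ F, (X - C l)) = 0 := by
    simpa using aeval_prod_eq_zero hf id
      (fun μ h => Finset.mem_union_left _ (mem_evs_of_hasEigenvalue h)) (fun _ _ => rfl)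
  have hconjprod : (∏ l ∈ F, (X - C l)).map conj' = ∏ l ∈ F, (X - C l) := by
    rw [Polynomial.map_prod]
    simp only [Polynomial.map_sub, map_X, map_C]
    refine Finset.prod_nbij' (fun l => conj' l) (fun l => conj' l) ?_ ?_ ?_ ?_ ?_
    · intro l hl
      rw [hF] at hl ⊢
      rcases Finset.mem_union.mp hl with h1 | h1
      · exact Finset.mem_union_right _ (Finset.mem_image_of_mem _ h1)
      · obtain ⟨m, hm, rfl⟩ := Finset.mem_image.mp h1
        simp only [Complex.conj_conj]
        exact Finset.mem_union_left _ hm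
    · intro l hl
      rw [hF] at hl ⊢
      rcases Finset.mem_union.mp hl with h1 | h1
      · exact Finset.mem_union_right _ (Finset.mem_image_of_mem _ h1)
      · obtain ⟨m, hm, rfl⟩ := Finset.mem_image.mp h1
        simp only [Complex.conj_conj]
        exact Finset.mem_union_left _ hm
    · intro l _; simp
    · intro l _; simp
    · intro l _; simp
  obtain ⟨P, hP⟩ := exists_real_map_eq (coeff_im_zero_of_map_conj hconjprod)
  have hPa : aeval f P = 0 := by
    apply cplx_injective
    rw [cplx_aeval, hP, hq, cplx_zero]
  have hPsq : Squarefree P := by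
    have h1 : Squarefree (P.map (algebraMap ℝ ℂ)) := hP ▸ squarefree_prod_X_sub_C F
    have h2 : (P.map (algebraMap ℝ ℂ)).Separable := PerfectField.separable_iff_squarefree.mpr h1
    have h3 : P.Separable := (Polynomial.separable_map _).mp h2
    exact h3.squarefree
  exact Module.End.isSemisimple_of_squarefree_aeval_eq_zero hPsq hPa

end Real
end MJD


namespace MJD

open Polynomial

lemma exists_of_isRoot_prod {F : Finset ℂ} {r : ℂ → ℂ} {μ : ℂ}
    (h : (∏ l ∈ F, (X - C (r l))).IsRoot μ) : ∃ l ∈ F, μ = r l := by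
  rw [IsRoot, eval_prod] at h
  obtain ⟨l, hl, h2⟩ := Finset.prod_eq_zero_iff.mp h
  exact ⟨l, hl, by simpa [sub_eq_zero] using h2⟩

lemma conj_mem_union_image (F : Finset ℂ) :
    ∀ l ∈ F ∪ F.image (starRingEnd ℂ), (starRingEnd ℂ) l ∈ F ∪ F.image (starRingEnd ℂ) := by
  intro l hl
  rcases Finset.mem_union.mp hl with h1 | h1
  · exact Finset.mem_union_right _ (Finset.mem_image_of_mem _ h1)
  · obtain ⟨m, hm, rfl⟩ := Finset.mem_image.mp h1
    simp only [Complex.conj_conj]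
    exact Finset.mem_union_left _ hm

end MJD

set_option maxHeartbeats 1000000 in
open MJD Polynomial in
theorem multiplicative_jordan_decomposition
    {V : Type*} [AddCommGroup V] [Module ℝ V] [FiniteDimensional ℝ V]
    (g : Module.End ℝ V) (hg : IsUnit g) :
    ∃! d : Module.End ℝ V × Module.End ℝ V × Module.End ℝ V,
      IsUnit d.1 ∧ IsUnit d.2.1 ∧ IsUnit d.2.2 ∧
      Commute d.1 d.2.1 ∧ Commute d.1 d.2.2 ∧ Commute d.2.1 d.2.2 ∧
      IsMultElliptic d.1 ∧ IsMultHyperbolic d.2.1 ∧ IsNilpotent (d.2.2 - 1) ∧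
      g = d.1 * d.2.1 * d.2.2 := by
  classical
  obtain ⟨n, hn_mem, s, hs_mem, hn_nil, hs_ss, hgns⟩ :=
    Module.End.exists_isNilpotent_isSemisimple (f := g)
  have hcomm_sn : Commute s n := commute_of_mem_adjoin_both hs_mem hn_mem
  have hcomm_gn : Commute g n := commute_of_mem_adjoin (Commute.refl g) hn_mem
  have hcomm_gs : Commute g s := commute_of_mem_adjoin (Commute.refl g) hs_mem
  -- `s` is a unit
  have hginv_n : Commute n (↑hg.unit⁻¹ : Module.End ℝ V) := by
    have : Commute n ↑hg.unit := by rw [IsUnit.unit_spec]; exact hcomm_gn.symm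
    exact this.units_inv_right
  have hnil2 : IsNilpotent ((↑hg.unit⁻¹ : Module.End ℝ V) * n) :=
    hginv_n.symm.isNilpotent_mul_left hn_nil
  have hs_eq : s = g * (1 - (↑hg.unit⁻¹ : Module.End ℝ V) * n) := by
    have h1 : g * ((↑hg.unit⁻¹ : Module.End ℝ V) * n) = n := by
      rw [← mul_assoc]
      have : g * (↑hg.unit⁻¹ : Module.End ℝ V) = 1 := hg.mul_val_inv
      rw [this, one_mul]
    rw [mul_sub, mul_one, h1, hgns]
    abel
  have hs_unit : IsUnit s := by
    rw [hs_eq]; exact hg.mul hnil2.isUnit_one_sub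
  set si : Module.End ℝ V := ↑hs_unit.unit⁻¹ with hsi
  have hsi_s : si * s = 1 := hs_unit.val_inv_mul
  have hs_si : s * si = 1 := hs_unit.mul_val_inv
  have hcomm_inv : ∀ a : Module.End ℝ V, Commute a s → Commute a si := by
    intro a ha
    have : Commute a ↑hs_unit.unit := by rw [IsUnit.unit_spec]; exact ha
    exact this.units_inv_right
  have hcomm_ns : Commute n s := hcomm_sn.symm
  have hcomm_n_si : Commute n si := hcomm_inv n hcomm_ns
  set u : Module.End ℝ V := 1 + si * n with hu
  have hsu : s * u = s + n := by
    rw [hu, mul_add, mul_one, ← mul_assoc, hs_si, one_mul]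
  have hgsu : g = s * u := by rw [hsu, hgns]; abel
  have hu_sub : u - 1 = si * n := by rw [hu]; abel
  have hu_nil : IsNilpotent (u - 1) := by
    rw [hu_sub]; exact hcomm_n_si.symm.isNilpotent_mul_left hn_nil
  have hu_unit : IsUnit u := by
    have h1 : IsNilpotent (-(si * n)) := (hcomm_n_si.symm.isNilpotent_mul_left hn_nil).neg
    have h2 := h1.isUnit_one_sub
    rwa [sub_neg_eq_add, ← hu] at h2
  -- the complexification of `s`
  set S := cplx s with hS
  have hS_unit : IsUnit S := cplx_isUnit hs_unit
  have hS_diag : IsDiag S := isDiag_cplx_of_isSemisimple hs_ss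
  set Λ : Finset ℂ := evs S ∪ (evs S).image (starRingEnd ℂ) with hΛ
  have hΛconj : ∀ l ∈ Λ, (starRingEnd ℂ) l ∈ Λ := conj_mem_union_image _
  have hΛeig : ∀ μ : ℂ, S.HasEigenvalue μ → μ ∈ Λ := fun μ h =>
    Finset.mem_union_left _ (mem_evs_of_hasEigenvalue h)
  have hΛ0 : ∀ l ∈ Λ, l ≠ 0 := by
    intro l hl
    rcases Finset.mem_union.mp hl with h1 | h1
    · exact mem_evs_ne_zero hS_unit h1
    · obtain ⟨m, hm, rfl⟩ := Finset.mem_image.mp h1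
      intro hc
      exact mem_evs_ne_zero hS_unit hm (by simpa using congrArg (starRingEnd ℂ) hc)
  obtain ⟨P, hP⟩ := interp_abs Λ hΛconj
  set Q : ℂ[X] := P.map (algebraMap ℝ ℂ) with hQ
  set h0 : Module.End ℝ V := aeval s P with hh0def
  have hch0 : cplx h0 = aeval S Q := cplx_aeval s P
  have hact : ∀ μ : ℂ, ∀ x ∈ S.eigenspace μ, cplx h0 x = Q.eval μ • x := by
    intro μ x hx
    rw [hch0]
    exact aeval_apply_smul S (Module.End.mem_eigenspace_iff.mp hx) Q
  have habsne : ∀ l ∈ Λ, ((‖l‖ : ℝ) : ℂ) ≠ 0 := by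
    intro l hl hc
    exact hΛ0 l hl (by simpa using hc)
  -- IsDiag for cplx h0
  have hd_h0 : IsDiag (cplx h0) := by
    rw [IsDiag, eq_top_iff, ← hS_diag]
    refine iSup_le fun μ => ?_
    by_cases hbot : S.eigenspace μ = ⊥
    · rw [hbot]; exact bot_le
    · refine le_trans ?_ (le_iSup _ (Q.eval μ))
      intro x hx
      exact Module.End.mem_eigenspace_iff.mpr (hact μ x hx)
  -- annihilating polynomial for cplx h0
  set R : ℂ[X] := ∏ l ∈ Λ, (X - C ((‖l‖ : ℝ) : ℂ)) with hR
  have hannR : aeval (cplx h0) R = 0 := by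
    refine aeval_eq_zero_of_scalar_on_eigenspaces hS_diag (fun μ x hx => ?_)
    rcases eq_or_ne x 0 with rfl | hx0
    · exact ⟨0, by simp, by simp⟩
    · have hμ : μ ∈ Λ :=
        hΛeig μ (Module.End.hasEigenvalue_of_hasEigenvector ⟨hx, hx0⟩)
      refine ⟨Q.eval μ, hact μ x hx, ?_⟩
      have h1 : Q.eval μ = ((‖μ‖ : ℝ) : ℂ) := hP μ hμ
      have h2 : R.eval (Q.eval μ) = 0 := by
        rw [h1, hR, eval_prod]
        exact Finset.prod_eq_zero hμ (by simp)
      rw [h2, zero_smul]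
  have hev_h0 : ∀ ν : ℂ, (cplx h0).HasEigenvalue ν → ν.im = 0 ∧ 0 < ν.re := by
    intro ν hν
    obtain ⟨l, hl, rfl⟩ := exists_of_isRoot_prod
      (isRoot_of_hasEigenvalue_of_aeval_eq_zero hannR hν)
    refine ⟨by simp, ?_⟩
    simp only [Complex.ofReal_re]
    exact (norm_pos_iff.mpr (hΛ0 l hl))
  -- h0 is a unit
  have hh0_unit : IsUnit h0 := by
    rw [Module.End.isUnit_iff]
    have hker : LinearMap.ker h0 = ⊥ := by
      rw [eq_bot_iff]
      intro v hv
      rw [LinearMap.mem_ker] at hv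
      rw [Submodule.mem_bot]
      by_contra hv0
      have h1 : cplx h0 ((1 : ℂ) ⊗ₜ[ℝ] v) = 0 := by
        show (LinearMap.baseChange ℂ h0) ((1 : ℂ) ⊗ₜ[ℝ] v) = 0
        rw [LinearMap.baseChange_tmul, hv, tmul_zero]
      have h2 : (1 : ℂ) ⊗ₜ[ℝ] v ≠ 0 := fun hc => hv0 (one_tmul_eq_zero_iff.mp hc)
      have h3 : (cplx h0).HasEigenvalue 0 :=
        Module.End.hasEigenvalue_of_hasEigenvector
          ⟨Module.End.mem_eigenspace_iff.mpr (by rw [h1, zero_smul]), h2⟩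
      exact lt_irrefl 0 (by simpa using (hev_h0 0 h3).2)
    have hinj : Function.Injective h0 := LinearMap.ker_eq_bot.mp hker
    exact ⟨hinj, (LinearMap.injective_iff_surjective).mp hinj⟩
  set h0i : Module.End ℝ V := ↑hh0_unit.unit⁻¹ with hh0i
  have hh0i_h0 : h0i * h0 = 1 := hh0_unit.val_inv_mul
  have hh0_h0i : h0 * h0i = 1 := hh0_unit.mul_val_inv
  have hcomm_invh : ∀ a : Module.End ℝ V, Commute a h0 → Commute a h0i := by
    intro a ha
    have : Commute a ↑hh0_unit.unit := by rw [IsUnit.unit_spec]; exact ha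
    exact this.units_inv_right
  set e0 : Module.End ℝ V := s * h0i with he0
  -- inverse action on eigenspaces
  have hch0_unit : IsUnit (cplx h0) := cplx_isUnit hh0_unit
  have hch0i : cplx h0 * cplx h0i = 1 := by
    rw [← cplx_mul, hh0_h0i, cplx_one]
  have hacti : ∀ μ ∈ Λ, ∀ x ∈ S.eigenspace μ,
      cplx h0i x = ((‖μ‖ : ℝ) : ℂ)⁻¹ • x := by
    intro μ hμ x hx
    have habs : Q.eval μ = ((‖μ‖ : ℝ) : ℂ) := hP μ hμ
    have h1 : cplx h0 (((‖μ‖ : ℝ) : ℂ)⁻¹ • x) = x := by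
      rw [map_smul, hact μ x hx, habs, smul_smul,
        inv_mul_cancel₀ (habsne μ hμ), one_smul]
    have h2 : cplx h0 (cplx h0i x) = x := by
      have : (cplx h0 * cplx h0i) x = x := by rw [hch0i]; rfl
      exact this
    exact (Module.End.isUnit_iff _).mp hch0_unit |>.injective (h2.trans h1.symm)
  have hacte : ∀ μ ∈ Λ, ∀ x ∈ S.eigenspace μ,
      cplx e0 x = (μ * ((‖μ‖ : ℝ) : ℂ)⁻¹) • x := by
    intro μ hμ x hx
    have h1 : cplx e0 x = cplx s (cplx h0i x) := by
      rw [he0, cplx_mul]; rfl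
    rw [h1, hacti μ hμ x hx, map_smul, ← hS,
      Module.End.mem_eigenspace_iff.mp hx, smul_smul, mul_comm]
  have hd_e0 : IsDiag (cplx e0) := by
    rw [IsDiag, eq_top_iff, ← hS_diag]
    refine iSup_le fun μ => ?_
    by_cases hbot : S.eigenspace μ = ⊥
    · rw [hbot]; exact bot_le
    · have hμ : μ ∈ Λ := hΛeig μ hbot
      refine le_trans ?_ (le_iSup _ (μ * ((‖μ‖ : ℝ) : ℂ)⁻¹))
      intro x hx
      exact Module.End.mem_eigenspace_iff.mpr (hacte μ hμ x hx)
  set Re : ℂ[X] := ∏ l ∈ Λ, (X - C (l * ((‖l‖ : ℝ) : ℂ)⁻¹)) with hRe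
  have hannRe : aeval (cplx e0) Re = 0 := by
    refine aeval_eq_zero_of_scalar_on_eigenspaces hS_diag (fun μ x hx => ?_)
    rcases eq_or_ne x 0 with rfl | hx0
    · exact ⟨0, by simp, by simp⟩
    · have hμ : μ ∈ Λ :=
        hΛeig μ (Module.End.hasEigenvalue_of_hasEigenvector ⟨hx, hx0⟩)
      refine ⟨μ * ((‖μ‖ : ℝ) : ℂ)⁻¹, hacte μ hμ x hx, ?_⟩
      have h2 : Re.eval (μ * ((‖μ‖ : ℝ) : ℂ)⁻¹) = 0 := by
        rw [hRe, eval_prod]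
        exact Finset.prod_eq_zero hμ (by simp)
      rw [h2, zero_smul]
  have hev_e0 : ∀ ν : ℂ, (cplx e0).HasEigenvalue ν → ‖ν‖ = 1 := by
    intro ν hν
    obtain ⟨l, hl, rfl⟩ := exists_of_isRoot_prod
      (isRoot_of_hasEigenvalue_of_aeval_eq_zero hannRe hν)
    have hl0 : ‖l‖ ≠ 0 := fun hc => hΛ0 l hl (by simpa using hc)
    rw [norm_mul, norm_inv, Complex.norm_of_nonneg (norm_nonneg l),
      mul_inv_cancel₀ hl0]
  -- commutation relations
  have hcomm_s_h0 : Commute s h0 := commute_aeval (Commute.refl s) P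
  have hcomm_n_h0 : Commute n h0 := commute_aeval hcomm_ns P
  have hcomm_s_h0i : Commute s h0i := hcomm_invh s hcomm_s_h0
  have hcomm_h0_si : Commute h0 si := hcomm_inv h0 hcomm_s_h0.symm
  have hcomm_e0_h0 : Commute e0 h0 :=
    hcomm_s_h0.mul_left (hcomm_invh h0 (Commute.refl h0)).symm
  have hcomm_h0_u : Commute h0 u := by
    rw [hu]
    exact (Commute.one_right h0).add_right (hcomm_h0_si.mul_right hcomm_n_h0.symm)
  have hcomm_e0_u : Commute e0 u := by
    have h1 : Commute s u := by
      rw [hu]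
      exact (Commute.one_right s).add_right
        ((hcomm_inv s (Commute.refl s)).mul_right hcomm_ns.symm)
    have h2 : Commute h0i u := (hcomm_invh u hcomm_h0_u.symm).symm
    exact h1.mul_left h2
  have he0h0 : e0 * h0 = s := by
    rw [he0, mul_assoc, hh0i_h0, mul_one]
  have hge0 : g = e0 * h0 * u := by rw [he0h0, hgsu]
  have he0_unit : IsUnit e0 := hs_unit.mul (hh0_unit.unit⁻¹.isUnit)
  -- the uniqueness part
  refine ⟨(e0, h0, u), ⟨he0_unit, hh0_unit, hu_unit, hcomm_e0_h0, hcomm_e0_u, hcomm_h0_u,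
    ⟨hd_e0, hev_e0⟩, ⟨hd_h0, hev_h0⟩, hu_nil, hge0⟩, ?_⟩
  rintro ⟨e, h, w⟩ ⟨he_u, hh_u, hw_u, hc_eh, hc_ew, hc_hw, ⟨he_d, he_ab⟩, ⟨hh_d, hh_ev⟩,
    hw_nil, hgd⟩
  simp only [Prod.mk.injEq]
  -- semisimplicity over ℝ
  have he_ss : e.IsSemisimple := isSemisimple_of_isDiag_cplx he_d
  have hh_ss : h.IsSemisimple := isSemisimple_of_isDiag_cplx hh_d
  have hs'_ss : (e * h).IsSemisimple :=
    Module.End.IsSemisimple.mul_of_commute hc_eh he_ss hh_ss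
  set s' : Module.End ℝ V := e * h with hs'
  set n' : Module.End ℝ V := s' * (w - 1) with hn'
  have hc_s'w : Commute s' (w - 1) :=
    (hc_ew.mul_left hc_hw).sub_right (Commute.one_right _)
  have hn'_nil : IsNilpotent n' := hc_s'w.isNilpotent_mul_left hw_nil
  have hgd' : g = s' + n' := by
    rw [hgd, hn', hs', mul_sub, mul_one]
    abel
  have hc_s'g : Commute s' g := by
    rw [hgd]
    exact (((Commute.refl e).mul_left hc_eh.symm).mul_right
      (hc_eh.mul_left (Commute.refl h))).mul_right (hc_ew.mul_left hc_hw)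
  have hc_wg : Commute w g := by
    rw [hgd]
    exact (hc_ew.symm.mul_right hc_hw.symm).mul_right (Commute.refl w)
  have hc_n'g : Commute n' g := by
    rw [hn']
    exact hc_s'g.mul_left (hc_wg.sub_left (Commute.one_left g))
  have hc_s's : Commute s' s := commute_of_mem_adjoin hc_s'g hs_mem
  have hc_n'n : Commute n' n := commute_of_mem_adjoin hc_n'g hn_mem
  have h5 : n + s = s' + n' := by rw [← hgns, hgd']
  have hd0 : s - s' = n' - n := by
    rw [sub_eq_sub_iff_add_eq_add, add_comm s n, add_comm n' s']
    exact h5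
  have hss_sub : (s - s').IsSemisimple :=
    Module.End.IsSemisimple.sub_of_commute hc_s's.symm hs_ss hs'_ss
  have hnil_sub : IsNilpotent (n' - n) := hc_n'n.isNilpotent_sub hn'_nil hn_nil
  have h6 : s - s' = 0 :=
    Module.End.eq_zero_of_isNilpotent_isSemisimple (hd0 ▸ hnil_sub) hss_sub
  have hseq : s' = s := by
    have := sub_eq_zero.mp h6
    exact this.symm
  have hneq : n' = n := by
    have h7 : n' - n = 0 := by rw [← hd0, h6]
    exact sub_eq_zero.mp h7
  -- w = u
  have hwu : w = u := by
    have h8 : s * (w - 1) = n := by rw [← hseq, ← hn', hneq]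
    have h9 : w - 1 = si * n := by
      rw [← h8, ← mul_assoc, hsi_s, one_mul]
    have h10 : w - 1 = u - 1 := by rw [h9, hu_sub]
    have := sub_left_injective h10
    exact this
  -- h = h0 via simultaneous diagonalization
  have hAB : Commute (cplx e) (cplx h) := by
    rw [commute_iff_eq, ← cplx_mul, ← cplx_mul, hc_eh.eq]
  have hAss : (cplx e).IsSemisimple := isSemisimple_of_isDiag he_d
  have hBss : (cplx h).IsSemisimple := isSemisimple_of_isDiag hh_d
  have hAmax : ∀ T : Module.End ℝ V, IsDiag (cplx T) →
      ⨆ μ : ℂ, (cplx T).maxGenEigenspace μ = ⊤ := by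
    intro T hT
    rw [eq_top_iff, ← hT]
    refine iSup_le fun μ => le_trans ?_ (le_iSup _ μ)
    exact ((cplx T).genEigenspace μ).monotone le_top
  set fam : Bool → Module.End ℂ (ℂ ⊗[ℝ] V) := fun b => cond b (cplx e) (cplx h) with hfam
  have hsim : ⨆ χ : Bool → ℂ, ⨅ i, (fam i).maxGenEigenspace (χ i) = ⊤ := by
    apply Module.End.iSup_iInf_maxGenEigenspace_eq_top_of_iSup_maxGenEigenspace_eq_top_of_commute
    · intro i j hij
      cases i <;> cases j
      · exact absurd rfl hij
      · exact hAB.symm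
      · exact hAB
      · exact absurd rfl hij
    · intro i
      cases i
      · exact hAmax h hh_d
      · exact hAmax e he_d
  have hkey : cplx h = cplx h0 := by
    have hle : (⨆ χ : Bool → ℂ, ⨅ i, (fam i).maxGenEigenspace (χ i)) ≤
        LinearMap.ker (cplx h - cplx h0) := by
      refine iSup_le fun χ => ?_
      intro x hx
      have hxA : x ∈ (cplx e).maxGenEigenspace (χ true) := by
        have := (Submodule.mem_iInf _).mp hx true
        simpa [hfam] using this
      have hxB : x ∈ (cplx h).maxGenEigenspace (χ false) := by
        have := (Submodule.mem_iInf _).mp hx false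
        simpa [hfam] using this
      rw [hAss.isFinitelySemisimple.maxGenEigenspace_eq_eigenspace] at hxA
      rw [hBss.isFinitelySemisimple.maxGenEigenspace_eq_eigenspace] at hxB
      set α := χ true
      set β := χ false
      have hA : cplx e x = α • x := Module.End.mem_eigenspace_iff.mp hxA
      have hB : cplx h x = β • x := Module.End.mem_eigenspace_iff.mp hxB
      rcases eq_or_ne x 0 with rfl | hx0
      · simp
      have hαab : ‖α‖ = 1 :=
        he_ab α (Module.End.hasEigenvalue_of_hasEigenvector ⟨hxA, hx0⟩)
      have hβev : β.im = 0 ∧ 0 < β.re :=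
        hh_ev β (Module.End.hasEigenvalue_of_hasEigenvector ⟨hxB, hx0⟩)
      have hSx : S x = (α * β) • x := by
        have h1 : cplx (e * h) x = cplx e (cplx h x) := by rw [cplx_mul]; rfl
        have h2 : cplx (e * h) = S := by rw [← hs', hseq]
        rw [← h2, h1, hB, map_smul, hA, smul_smul, mul_comm]
      have hxS : x ∈ S.eigenspace (α * β) := Module.End.mem_eigenspace_iff.mpr hSx
      have hmem : α * β ∈ Λ :=
        hΛeig _ (Module.End.hasEigenvalue_of_hasEigenvector ⟨hxS, hx0⟩)
      have hc0 : cplx h0 x = Q.eval (α * β) • x := hact (α * β) x hxS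
      have hβreal : β = (β.re : ℂ) := by
        apply Complex.ext <;> simp [hβev.1]
      have habs2 : ((‖α * β‖ : ℝ) : ℂ) = β := by
        rw [norm_mul, hαab, one_mul]
        rw [hβreal, Complex.norm_of_nonneg (le_of_lt (by simpa using hβev.2))]
      have hfin : cplx h0 x = β • x := by
        rw [hc0, hP _ hmem, habs2]
      rw [LinearMap.mem_ker, LinearMap.sub_apply, hB, hfin, sub_self]
    rw [hsim, top_le_iff] at hle
    refine LinearMap.ext fun x => ?_
    have hx : (cplx h - cplx h0) x = 0 := by
      have hmem : x ∈ LinearMap.ker (cplx h - cplx h0) := by rw [hle]; trivial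
      simpa using hmem
    simpa [sub_eq_zero] using hx
  have hheq : h = h0 := cplx_injective hkey
  -- e = e0
  have heeq : e = e0 := by
    have h12 : e * h = s := by rw [← hs', hseq]
    have h13 : e0 * h = s := by rw [hheq, he0h0]
    exact hh_u.mul_right_cancel (h12.trans h13.symm)
  exact ⟨heeq, hheq, hwu⟩
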